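/- (Lemma 2.1, eq. (2.3)) Let a, b, c be real numbers with a·c·(b²−4ac) ≠ 0, and let p, q ≥ 0 be integers with p + q ≥ 2; set n := 2p + 2q. Then there exist real polynomials l̄₁, l̄₂ with deg l̄₁ ≤ ⌊(n−2)/4⌋ and deg l̄₂ ≤ ⌊n/4⌋ − 1, such that for every h ∈ ℝ and every closed curve γ at level h of H: I_{2p,2q}(γ) = l̄₁(h)·I_{0,2}(γ) + l̄₂(h)·I_{2,2}(γ). -/

import Mathlib

/-- The Hamiltonian H(x,y) = x² − y² + a·x⁴ + c·y⁴ + b·x²·y². -/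
noncomputable def Hfun (a b c x y : ℝ) : ℝ :=
  x ^ 2 - y ^ 2 + a * x ^ 4 + c * y ^ 4 + b * x ^ 2 * y ^ 2

/-- The line integral I_{i,j}(γ) = ∮_γ x^i y^j dx along a parametrized curve of period T. -/
noncomputable def lineInt (x y : ℝ → ℝ) (T : ℝ) (i j : ℕ) : ℝ :=
  ∫ t in (0:ℝ)..T, x t ^ i * y t ^ j * deriv x t

noncomputable def lineIntY (x y : ℝ → ℝ) (T : ℝ) (i j : ℕ) : ℝ :=
  ∫ t in (0:ℝ)..T, x t ^ i * y t ^ j * deriv y t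

section curve

variable {a b c h : ℝ} {x y : ℝ → ℝ} {T : ℝ}

private lemma int_per (F : ℝ → ℝ) (hF : ContDiff ℝ 1 F)
    (hp : ∀ t, F (t + T) = F t) : ∫ t in (0:ℝ)..T, deriv F t = 0 := by
  rw [intervalIntegral.integral_deriv_eq_sub
      (fun t _ => (hF.differentiable one_ne_zero).differentiableAt)
      ((hF.continuous_deriv le_rfl).intervalIntegrable 0 T)]
  have := hp 0
  rw [zero_add] at this
  rw [this, sub_self]

private lemma integral_two (f1 f2 : ℝ → ℝ) (h1 : Continuous f1) (h2 : Continuous f2)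
    (r1 r2 : ℝ) :
    (∫ t in (0:ℝ)..T, (r1 * f1 t + r2 * f2 t)) =
      r1 * (∫ t in (0:ℝ)..T, f1 t) + r2 * ∫ t in (0:ℝ)..T, f2 t := by
  rw [intervalIntegral.integral_add
      (show IntervalIntegrable (fun t => r1 * f1 t) MeasureTheory.volume 0 T from
        (continuous_const.mul h1).intervalIntegrable 0 T)
      (show IntervalIntegrable (fun t => r2 * f2 t) MeasureTheory.volume 0 T from
        (continuous_const.mul h2).intervalIntegrable 0 T),
    intervalIntegral.integral_const_mul, intervalIntegral.integral_const_mul]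

private lemma integral_six (f1 f2 f3 f4 f5 f6 : ℝ → ℝ) (h1 : Continuous f1)
    (h2 : Continuous f2) (h3 : Continuous f3) (h4 : Continuous f4) (h5 : Continuous f5)
    (h6 : Continuous f6) (r1 r2 r3 r4 r5 r6 : ℝ) :
    (∫ t in (0:ℝ)..T, (r1 * f1 t + r2 * f2 t + r3 * f3 t + r4 * f4 t + r5 * f5 t + r6 * f6 t)) =
      r1 * (∫ t in (0:ℝ)..T, f1 t) + r2 * (∫ t in (0:ℝ)..T, f2 t) +
      r3 * (∫ t in (0:ℝ)..T, f3 t) + r4 * (∫ t in (0:ℝ)..T, f4 t) +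
      r5 * (∫ t in (0:ℝ)..T, f5 t) + r6 * ∫ t in (0:ℝ)..T, f6 t := by
  have i1 : IntervalIntegrable (fun t => r1 * f1 t) MeasureTheory.volume 0 T :=
    (continuous_const.mul h1).intervalIntegrable 0 T
  have i2 : IntervalIntegrable (fun t => r2 * f2 t) MeasureTheory.volume 0 T :=
    (continuous_const.mul h2).intervalIntegrable 0 T
  have i3 : IntervalIntegrable (fun t => r3 * f3 t) MeasureTheory.volume 0 T :=
    (continuous_const.mul h3).intervalIntegrable 0 T
  have i4 : IntervalIntegrable (fun t => r4 * f4 t) MeasureTheory.volume 0 T :=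
    (continuous_const.mul h4).intervalIntegrable 0 T
  have i5 : IntervalIntegrable (fun t => r5 * f5 t) MeasureTheory.volume 0 T :=
    (continuous_const.mul h5).intervalIntegrable 0 T
  have i6 : IntervalIntegrable (fun t => r6 * f6 t) MeasureTheory.volume 0 T :=
    (continuous_const.mul h6).intervalIntegrable 0 T
  have i12 : IntervalIntegrable (fun t => r1 * f1 t + r2 * f2 t) MeasureTheory.volume 0 T :=
    i1.add i2
  have i13 : IntervalIntegrable (fun t => r1 * f1 t + r2 * f2 t + r3 * f3 t)
      MeasureTheory.volume 0 T := i12.add i3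
  have i14 : IntervalIntegrable (fun t => r1 * f1 t + r2 * f2 t + r3 * f3 t + r4 * f4 t)
      MeasureTheory.volume 0 T := i13.add i4
  have i15 : IntervalIntegrable
      (fun t => r1 * f1 t + r2 * f2 t + r3 * f3 t + r4 * f4 t + r5 * f5 t)
      MeasureTheory.volume 0 T := i14.add i5
  rw [intervalIntegral.integral_add i15 i6, intervalIntegral.integral_add i14 i5,
    intervalIntegral.integral_add i13 i4, intervalIntegral.integral_add i12 i3,
    intervalIntegral.integral_add i1 i2,
    intervalIntegral.integral_const_mul, intervalIntegral.integral_const_mul,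
    intervalIntegral.integral_const_mul, intervalIntegral.integral_const_mul,
    intervalIntegral.integral_const_mul, intervalIntegral.integral_const_mul]

private lemma cont_ix (hx : ContDiff ℝ 1 x) (hy : ContDiff ℝ 1 y) (i j : ℕ) :
    Continuous fun t => x t ^ i * y t ^ j * deriv x t :=
  ((hx.continuous.pow i).mul (hy.continuous.pow j)).mul (hx.continuous_deriv le_rfl)

private lemma cont_iy (hx : ContDiff ℝ 1 x) (hy : ContDiff ℝ 1 y) (i j : ℕ) :
    Continuous fun t => x t ^ i * y t ^ j * deriv y t :=
  ((hx.continuous.pow i).mul (hy.continuous.pow j)).mul (hy.continuous_deriv le_rfl)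

/-- exactness relation: (i+1) ∮ x^i y^(j+1) dx + (j+1) ∮ x^(i+1) y^j dy = 0 -/
private lemma exact_rel (hx : ContDiff ℝ 1 x) (hy : ContDiff ℝ 1 y)
    (hper : ∀ t : ℝ, x (t + T) = x t ∧ y (t + T) = y t) (i j : ℕ) :
    ((i : ℝ) + 1) * lineInt x y T i (j + 1) + ((j : ℝ) + 1) * lineIntY x y T (i + 1) j = 0 := by
  have hx' : ∀ t, HasDerivAt x (deriv x t) t :=
    fun t => ((hx.differentiable one_ne_zero) t).hasDerivAt
  have hy' : ∀ t, HasDerivAt y (deriv y t) t :=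
    fun t => ((hy.differentiable one_ne_zero) t).hasDerivAt
  have hF : ContDiff ℝ 1 fun t => x t ^ (i + 1) * y t ^ (j + 1) := (hx.pow _).mul (hy.pow _)
  have h0 := int_per _ hF (fun t => by rw [(hper t).1, (hper t).2])
  have hder : ∀ t : ℝ, deriv (fun t => x t ^ (i + 1) * y t ^ (j + 1)) t =
      ((i : ℝ) + 1) * (x t ^ i * y t ^ (j + 1) * deriv x t) +
      ((j : ℝ) + 1) * (x t ^ (i + 1) * y t ^ j * deriv y t) := by
    intro t
    rw [(show HasDerivAt (fun t => x t ^ (i + 1) * y t ^ (j + 1)) _ t from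
      ((hx' t).pow (i + 1)).mul ((hy' t).pow (j + 1))).deriv]
    simp only [Nat.add_sub_cancel, Pi.pow_apply]
    push_cast
    ring
  rw [intervalIntegral.integral_congr (g := fun t =>
      ((i : ℝ) + 1) * (x t ^ i * y t ^ (j + 1) * deriv x t) +
      ((j : ℝ) + 1) * (x t ^ (i + 1) * y t ^ j * deriv y t)) (fun t _ => hder t),
    integral_two _ _ (cont_ix hx hy _ _) (cont_iy hx hy _ _)] at h0
  exact h0

/-- ∮ x^i dx = 0 -/
private lemma exact_x (hx : ContDiff ℝ 1 x) (hy : ContDiff ℝ 1 y)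
    (hper : ∀ t : ℝ, x (t + T) = x t ∧ y (t + T) = y t) (i : ℕ) :
    lineInt x y T i 0 = 0 := by
  have hx' : ∀ t, HasDerivAt x (deriv x t) t :=
    fun t => ((hx.differentiable one_ne_zero) t).hasDerivAt
  have hF : ContDiff ℝ 1 fun t => x t ^ (i + 1) := hx.pow _
  have h0 := int_per _ hF (fun t => by rw [(hper t).1])
  have hder : ∀ t : ℝ, deriv (fun t => x t ^ (i + 1)) t =
      ((i : ℝ) + 1) * (x t ^ i * y t ^ 0 * deriv x t) +
      (0 : ℝ) * (x t ^ i * y t ^ 0 * deriv x t) := by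
    intro t
    rw [(show HasDerivAt (fun t => x t ^ (i + 1)) _ t from (hx' t).pow (i + 1)).deriv]
    simp only [Nat.add_sub_cancel]
    push_cast
    ring
  rw [intervalIntegral.integral_congr (g := fun t =>
      ((i : ℝ) + 1) * (x t ^ i * y t ^ 0 * deriv x t) +
      (0:ℝ) * (x t ^ i * y t ^ 0 * deriv x t)) (fun t _ => hder t),
    integral_two _ _ (cont_ix hx hy _ _) (cont_ix hx hy _ _)] at h0
  have hne : ((i : ℝ) + 1) ≠ 0 := by positivity
  have h1 : ((i : ℝ) + 1) * lineInt x y T i 0 = 0 := by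
    rw [lineInt]; linarith [h0]
  exact (mul_eq_zero.mp h1).resolve_left hne

private lemma star_rel (hx : ContDiff ℝ 1 x) (hy : ContDiff ℝ 1 y)
    (hH : ∀ t : ℝ, Hfun a b c (x t) (y t) = h) (i j : ℕ) :
    lineInt x y T (i+2) j - lineInt x y T i (j+2) + a * lineInt x y T (i+4) j +
      c * lineInt x y T i (j+4) + b * lineInt x y T (i+2) (j+2) = h * lineInt x y T i j := by
  simp only [lineInt]
  have hz : ∀ t : ℝ, (1:ℝ) * (x t^(i+2) * y t^j * deriv x t) +
      (-1) * (x t^i * y t^(j+2) * deriv x t) + a * (x t^(i+4) * y t^j * deriv x t) +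
      c * (x t^i * y t^(j+4) * deriv x t) + b * (x t^(i+2) * y t^(j+2) * deriv x t) +
      (-h) * (x t^i * y t^j * deriv x t) = 0 := by
    intro t
    have hh := hH t
    simp only [Hfun] at hh
    linear_combination (x t ^ i * y t ^ j * deriv x t) * hh
  have h6 := integral_six (T := T) (fun t => x t^(i+2) * y t^j * deriv x t)
    (fun t => x t^i * y t^(j+2) * deriv x t) (fun t => x t^(i+4) * y t^j * deriv x t)
    (fun t => x t^i * y t^(j+4) * deriv x t) (fun t => x t^(i+2) * y t^(j+2) * deriv x t)
    (fun t => x t^i * y t^j * deriv x t)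
    (cont_ix hx hy _ _) (cont_ix hx hy _ _) (cont_ix hx hy _ _) (cont_ix hx hy _ _)
    (cont_ix hx hy _ _) (cont_ix hx hy _ _) 1 (-1) a c b (-h)
  have h0 := intervalIntegral.integral_congr (μ := MeasureTheory.volume)
    (g := fun _ : ℝ => (0:ℝ)) (fun t (_ : t ∈ Set.uIcc (0:ℝ) T) => hz t)
  simp only [intervalIntegral.integral_zero] at h0
  linear_combination h0 - h6

private lemma chain_rel (hx : ContDiff ℝ 1 x) (hy : ContDiff ℝ 1 y)
    (hH : ∀ t : ℝ, Hfun a b c (x t) (y t) = h) (i j : ℕ) :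
    2 * lineInt x y T (i+1) j + 4*a * lineInt x y T (i+3) j + 2*b * lineInt x y T (i+1) (j+2) +
      (-2) * lineIntY x y T i (j+1) + 4*c * lineIntY x y T i (j+3) +
      2*b * lineIntY x y T (i+2) (j+1) = 0 := by
  have hx' : ∀ t, HasDerivAt x (deriv x t) t :=
    fun t => ((hx.differentiable one_ne_zero) t).hasDerivAt
  have hy' : ∀ t, HasDerivAt y (deriv y t) t :=
    fun t => ((hy.differentiable one_ne_zero) t).hasDerivAt
  have hc : (fun s => x s ^ 2 - y s ^ 2 + a * x s ^ 4 + c * y s ^ 4 + b * x s ^ 2 * y s ^ 2)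
      = fun _ : ℝ => h := by
    funext s
    exact hH s
  have hd : ∀ t : ℝ, (2*x t + 4*a*x t^3 + 2*b*x t*y t^2) * deriv x t +
      (-(2*y t) + 4*c*y t^3 + 2*b*x t^2*y t) * deriv y t = 0 := by
    intro t
    have Hx := hx' t
    have Hy := hy' t
    have H := ((((Hx.pow 2).sub (Hy.pow 2)).add ((Hx.pow 4).const_mul a)).add
      ((Hy.pow 4).const_mul c)).add (((Hx.pow 2).const_mul b).mul (Hy.pow 2))
    have hzero : HasDerivAt
        (fun s => x s ^ 2 - y s ^ 2 + a * x s ^ 4 + c * y s ^ 4 + b * x s ^ 2 * y s ^ 2)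
        0 t := by
      rw [hc]; exact hasDerivAt_const t h
    have hu := H.unique hzero
    push_cast at hu
    norm_num at hu
    linear_combination hu
  simp only [lineInt, lineIntY]
  have hz : ∀ t : ℝ, (2:ℝ) * (x t^(i+1) * y t^j * deriv x t) +
      (4*a) * (x t^(i+3) * y t^j * deriv x t) + (2*b) * (x t^(i+1) * y t^(j+2) * deriv x t) +
      (-2) * (x t^i * y t^(j+1) * deriv y t) + (4*c) * (x t^i * y t^(j+3) * deriv y t) +
      (2*b) * (x t^(i+2) * y t^(j+1) * deriv y t) = 0 := by
    intro t
    have := hd t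
    linear_combination (x t ^ i * y t ^ j) * this
  have h6 := integral_six (T := T) (fun t => x t^(i+1) * y t^j * deriv x t)
    (fun t => x t^(i+3) * y t^j * deriv x t) (fun t => x t^(i+1) * y t^(j+2) * deriv x t)
    (fun t => x t^i * y t^(j+1) * deriv y t) (fun t => x t^i * y t^(j+3) * deriv y t)
    (fun t => x t^(i+2) * y t^(j+1) * deriv y t)
    (cont_ix hx hy _ _) (cont_ix hx hy _ _) (cont_ix hx hy _ _) (cont_iy hx hy _ _)
    (cont_iy hx hy _ _) (cont_iy hx hy _ _) 2 (4*a) (2*b) (-2) (4*c) (2*b)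
  have h0 := intervalIntegral.integral_congr (μ := MeasureTheory.volume)
    (g := fun _ : ℝ => (0:ℝ)) (fun t (_ : t ∈ Set.uIcc (0:ℝ) T) => hz t)
  simp only [intervalIntegral.integral_zero] at h0
  linear_combination h0 - h6

/-- the key derived relation (GREL). -/
private lemma grel_rel (hx : ContDiff ℝ 1 x) (hy : ContDiff ℝ 1 y)
    (hper : ∀ t : ℝ, x (t + T) = x t ∧ y (t + T) = y t)
    (hH : ∀ t : ℝ, Hfun a b c (x t) (y t) = h) (i j : ℕ) :
    b*((i:ℝ)+(j:ℝ)+5)*((j:ℝ)+4) * lineInt x y T (i+2) (j+2) +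
      2*c*((i:ℝ)+(j:ℝ)+5)*((j:ℝ)+2) * lineInt x y T i (j+4) =
    2*h*((j:ℝ)+2)*((j:ℝ)+4) * lineInt x y T i j - ((j:ℝ)+2)*((j:ℝ)+4) * lineInt x y T (i+2) j +
      (2*(j:ℝ)+(i:ℝ)+5)*((j:ℝ)+4) * lineInt x y T i (j+2) := by
  have S := star_rel (T := T) hx hy hH i j
  have CH := chain_rel (T := T) hx hy hH (i+1) j
  rw [show i+1+1 = i+2 from rfl, show i+1+3 = i+4 from rfl, show i+1+2 = i+3 from rfl] at CH
  have E1 := exact_rel hx hy hper i (j+1)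
  rw [show j+1+1 = j+2 from rfl] at E1
  have E2 := exact_rel hx hy hper i (j+3)
  rw [show j+3+1 = j+4 from rfl] at E2
  have E3 := exact_rel hx hy hper (i+2) (j+1)
  rw [show j+1+1 = j+2 from rfl, show i+2+1 = i+3 from rfl] at E3
  push_cast at E1 E2 E3 CH S
  linear_combination 2*((j:ℝ)+2)*((j:ℝ)+4)*S - (((j:ℝ)+2)*((j:ℝ)+4)/2)*CH -
    ((j:ℝ)+4)*E1 + 2*c*((j:ℝ)+2)*E2 + b*((j:ℝ)+4)*E3

/-- index-flexible versions -/
lemma starR (hx : ContDiff ℝ 1 x) (hy : ContDiff ℝ 1 y)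
    (hH : ∀ t : ℝ, Hfun a b c (x t) (y t) = h) (i j i2 i4 j2 j4 : ℕ)
    (e2 : i2 = i+2) (e4 : i4 = i+4) (f2 : j2 = j+2) (f4 : j4 = j+4) :
    lineInt x y T i2 j - lineInt x y T i j2 + a * lineInt x y T i4 j +
      c * lineInt x y T i j4 + b * lineInt x y T i2 j2 = h * lineInt x y T i j := by
  subst e2 e4 f2 f4; exact star_rel hx hy hH i j

lemma grelR (hx : ContDiff ℝ 1 x) (hy : ContDiff ℝ 1 y)
    (hper : ∀ t : ℝ, x (t + T) = x t ∧ y (t + T) = y t)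
    (hH : ∀ t : ℝ, Hfun a b c (x t) (y t) = h) (i j i2 j2 j4 : ℕ)
    (e2 : i2 = i+2) (f2 : j2 = j+2) (f4 : j4 = j+4) :
    b*((i:ℝ)+(j:ℝ)+5)*((j:ℝ)+4) * lineInt x y T i2 j2 +
      2*c*((i:ℝ)+(j:ℝ)+5)*((j:ℝ)+2) * lineInt x y T i j4 =
    2*h*((j:ℝ)+2)*((j:ℝ)+4) * lineInt x y T i j - ((j:ℝ)+2)*((j:ℝ)+4) * lineInt x y T i2 j +
      (2*(j:ℝ)+(i:ℝ)+5)*((j:ℝ)+4) * lineInt x y T i j2 := by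
  subst e2 f2 f4; exact grel_rel hx hy hper hH i j

end curve

open Polynomial

def Good (a b c : ℝ) (i j : ℕ) (l1 l2 : Polynomial ℝ) : Prop :=
  ∀ (h : ℝ) (x y : ℝ → ℝ) (T : ℝ), 0 < T →
    ContDiff ℝ 1 x → ContDiff ℝ 1 y →
    (∀ t : ℝ, x (t + T) = x t ∧ y (t + T) = y t) →
    (∀ t : ℝ, Hfun a b c (x t) (y t) = h) →
    lineInt x y T i j = l1.eval h * lineInt x y T 0 2 + l2.eval h * lineInt x y T 2 2

def Pq (a b c : ℝ) (p q : ℕ) : Prop :=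
  ∃ l1 l2 : Polynomial ℝ,
    l1.degree ≤ (((2 * p + 2 * q - 2) / 4 : ℕ) : WithBot ℕ) ∧
    l2.degree < (((2 * p + 2 * q) / 4 : ℕ) : WithBot ℕ) ∧
    Good a b c (2 * p) (2 * q) l1 l2

-- degree helpers
private lemma dC {r : ℝ} {p : Polynomial ℝ} : (C r * p).degree ≤ p.degree :=
  le_trans (degree_mul_le _ _) (by
    have : (C r).degree ≤ 0 := degree_C_le
    calc (C r).degree + p.degree ≤ 0 + p.degree := add_le_add this le_rfl
      _ = p.degree := zero_add _)

private lemma dCp {r : ℝ} {p : Polynomial ℝ} {D : WithBot ℕ} (h : p.degree ≤ D) :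
    (C r * p).degree ≤ D := le_trans dC h

private lemma dCp_lt {r : ℝ} {p : Polynomial ℝ} {D : WithBot ℕ} (h : p.degree < D) :
    (C r * p).degree < D := lt_of_le_of_lt dC h

private lemma dadd {p q : Polynomial ℝ} {D : WithBot ℕ} (hp : p.degree ≤ D)
    (hq : q.degree ≤ D) : (p + q).degree ≤ D :=
  le_trans (degree_add_le _ _) (max_le hp hq)

private lemma dadd_lt {p q : Polynomial ℝ} {D : WithBot ℕ} (hp : p.degree < D)
    (hq : q.degree < D) : (p + q).degree < D :=
  lt_of_le_of_lt (degree_add_le _ _) (max_lt hp hq)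

private lemma dXle {p : Polynomial ℝ} {d : ℕ} (h : p.degree ≤ (d : WithBot ℕ)) :
    (X * p).degree ≤ ((d + 1 : ℕ) : WithBot ℕ) := by
  refine le_trans (degree_mul_le _ _) ?_
  refine le_trans (add_le_add degree_X_le h) ?_
  rw [show ((d + 1 : ℕ) : WithBot ℕ) = ((1 : ℕ) : WithBot ℕ) + (d : WithBot ℕ) by
    rw [← Nat.cast_add, Nat.add_comm]]
  exact le_of_eq (by norm_num)

private lemma dXlt {p : Polynomial ℝ} {d : ℕ} (h : p.degree < (d : WithBot ℕ)) :
    (X * p).degree < ((d + 1 : ℕ) : WithBot ℕ) := by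
  rcases eq_or_ne p 0 with rfl | hne
  · rw [mul_zero, degree_zero]
    exact WithBot.bot_lt_coe _
  · have h1 : p.degree = (p.natDegree : WithBot ℕ) := degree_eq_natDegree hne
    have h2 : p.natDegree < d := by rw [h1] at h; exact_mod_cast h
    have h3 : (X * p).degree ≤ ((p.natDegree + 1 : ℕ) : WithBot ℕ) := dXle (le_of_eq h1)
    have h4 : ((p.natDegree + 1 : ℕ) : WithBot ℕ) < ((d + 1 : ℕ) : WithBot ℕ) := by
      exact_mod_cast Nat.add_lt_add_right h2 1
    exact lt_of_le_of_lt h3 h4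

private lemma dle_mono {p : Polynomial ℝ} {d1 d2 : ℕ} (h : p.degree ≤ (d1 : WithBot ℕ))
    (hd : d1 ≤ d2) : p.degree ≤ (d2 : WithBot ℕ) := le_trans h (WithBot.coe_le_coe.mpr hd)

private lemma dlt_mono {p : Polynomial ℝ} {d1 d2 : ℕ} (h : p.degree < (d1 : WithBot ℕ))
    (hd : d1 ≤ d2) : p.degree < (d2 : WithBot ℕ) := lt_of_lt_of_le h (WithBot.coe_le_coe.mpr hd)

-- base cases
private lemma case_q0 (a b c : ℝ) (p : ℕ) : Pq a b c p 0 := by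
  refine ⟨0, 0, by simp, by rw [degree_zero]; exact WithBot.bot_lt_coe _, ?_⟩
  intro h x y T hT hx hy hper hH
  rw [show 2 * 0 = 0 from rfl, exact_x hx hy hper]
  simp

private lemma case_01 (a b c : ℝ) : Pq a b c 0 1 := by
  refine ⟨1, 0, by simpa using degree_one_le, by rw [degree_zero]; exact WithBot.bot_lt_coe _, ?_⟩
  intro h x y T hT hx hy hper hH
  norm_num

private lemma case_11 (a b c : ℝ) : Pq a b c 1 1 := by
  refine ⟨0, 1, by simp, lt_of_le_of_lt degree_one_le (by exact_mod_cast zero_lt_one), ?_⟩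
  intro h x y T hT hx hy hper hH
  norm_num

private lemma case_02 (a b c : ℝ) (hc : c ≠ 0) : Pq a b c 0 2 := by
  refine ⟨C (1/c), C (-(b/c)), le_trans degree_C_le (by norm_num),
    lt_of_le_of_lt degree_C_le (by exact_mod_cast zero_lt_one), ?_⟩
  intro h x y T hT hx hy hper hH
  have S := starR (T := T) hx hy hH 0 0 2 4 2 4 rfl rfl rfl rfl
  have Z0 := exact_x hx hy hper 0
  have Z2 := exact_x hx hy hper 2
  have Z4 := exact_x hx hy hper 4
  rw [show 2 * 0 = 0 from rfl, show 2 * 2 = 4 from rfl]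
  simp only [eval_C]
  have hcw : c * (1/c) = 1 := mul_one_div_cancel hc
  linear_combination (1/c) * (h * Z0 - Z2 - a * Z4 + S) - lineInt x y T 0 4 * hcw

-- the u1 case : Pq (d+2) 1
private lemma case_u1 (a b c : ℝ) (hc : c ≠ 0) (hD : b^2 - 4*a*c ≠ 0) (d : ℕ)
    (IH1 : Pq a b c d 1) (IH2 : Pq a b c d 2) (IH3 : Pq a b c (d+1) 1) :
    Pq a b c (d+2) 1 := by
  obtain ⟨A1, B1, dA1, dB1, g1⟩ := IH1
  obtain ⟨A2, B2, dA2, dB2, g2⟩ := IH2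
  obtain ⟨A3, B3, dA3, dB3, g3⟩ := IH3
  refine ⟨C (1/(2*(2*(d:ℝ)+7)*(4*a*c - b^2))) *
      (C ((16*(d:ℝ)+8)*c) * (X * A1) + C ((4*(d:ℝ)+2)*c) * A2 +
        C (-((16*(d:ℝ)+32)*c + (4*(d:ℝ)+14)*b)) * A3),
    C (1/(2*(2*(d:ℝ)+7)*(4*a*c - b^2))) *
      (C ((16*(d:ℝ)+8)*c) * (X * B1) + C ((4*(d:ℝ)+2)*c) * B2 +
        C (-((16*(d:ℝ)+32)*c + (4*(d:ℝ)+14)*b)) * B3), ?_, ?_, ?_⟩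
  · exact dCp (dadd (dadd (dCp (dle_mono (dXle dA1) (by omega)))
      (dCp (dle_mono dA2 (by omega)))) (dCp (dle_mono dA3 (by omega))))
  · exact dCp_lt (dadd_lt (dadd_lt (dCp_lt (dlt_mono (dXlt dB1) (by omega)))
      (dCp_lt (dlt_mono dB2 (by omega)))) (dCp_lt (dlt_mono dB3 (by omega))))
  · intro h x y T hT hx hy hper hH
    have hv := g1 h x y T hT hx hy hper hH
    have hs := g2 h x y T hT hx hy hper hH
    have hw := g3 h x y T hT hx hy hper hH
    simp only [show 2*(d+1) = 2*d+2 by ring, show (2*1 : ℕ) = 2 by norm_num,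
      show (2*2 : ℕ) = 4 by norm_num] at hv hs hw
    have S1 := starR (T := T) hx hy hH (2*d) 2 (2*d+2) (2*d+4) 4 6
      (by omega) (by omega) (by omega) (by omega)
    have G0 := grelR hx hy hper hH (2*d+2) 0 (2*d+4) 2 4 (by omega) (by omega) (by omega)
    have G1 := grelR hx hy hper hH (2*d) 2 (2*d+2) 4 6 (by omega) (by omega) (by omega)
    have Z1 := exact_x hx hy hper (2*d+2)
    have Z2 := exact_x hx hy hper (2*d+4)
    push_cast at G0 G1
    have hM : (2*(2*(d:ℝ)+7)*(4*a*c - b^2)) ≠ 0 := by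
      refine mul_ne_zero (by positivity) ?_
      intro hz
      apply hD
      linarith
    have hMw : (2*(2*(d:ℝ)+7)*(4*a*c - b^2)) * (1/(2*(2*(d:ℝ)+7)*(4*a*c - b^2))) = 1 :=
      mul_one_div_cancel hM
    rw [show 2*(d+2) = 2*d+4 by ring, show (2*1 : ℕ) = 2 by norm_num]
    simp only [eval_mul, eval_add, eval_C, eval_X]
    linear_combination (1/(2*(2*(d:ℝ)+7)*(4*a*c - b^2))) *
      ( 8*(2*(d:ℝ)+7)*c*S1 - c*G1 - (b/2)*G0 - 8*b*h*Z1 + 4*b*Z2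
        + (16*(d:ℝ)+8)*c*h*hv + (4*(d:ℝ)+2)*c*hs
        + (-((16*(d:ℝ)+32)*c + (4*(d:ℝ)+14)*b))*hw )
      - lineInt x y T (2*d+4) 2 * hMw

-- the u2 case : Pq (d+1) 2
private lemma case_u2 (a b c : ℝ) (hc : c ≠ 0) (hD : b^2 - 4*a*c ≠ 0) (d : ℕ)
    (IH1 : Pq a b c d 1) (IH2 : Pq a b c d 2) (IH3 : Pq a b c (d+1) 1) :
    Pq a b c (d+1) 2 := by
  obtain ⟨A1, B1, dA1, dB1, g1⟩ := IH1
  obtain ⟨A2, B2, dA2, dB2, g2⟩ := IH2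
  obtain ⟨A3, B3, dA3, dB3, g3⟩ := IH3
  refine ⟨C (1/(2*(2*(d:ℝ)+7)*(4*a*c - b^2))) *
      (C (-((16*(d:ℝ)+8)*b)) * (X * A1) + C (-((4*(d:ℝ)+2)*b)) * A2 +
        C ((16*(d:ℝ)+56)*a + (16*(d:ℝ)+32)*b) * A3),
    C (1/(2*(2*(d:ℝ)+7)*(4*a*c - b^2))) *
      (C (-((16*(d:ℝ)+8)*b)) * (X * B1) + C (-((4*(d:ℝ)+2)*b)) * B2 +
        C ((16*(d:ℝ)+56)*a + (16*(d:ℝ)+32)*b) * B3), ?_, ?_, ?_⟩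
  · exact dCp (dadd (dadd (dCp (dle_mono (dXle dA1) (by omega)))
      (dCp (dle_mono dA2 (by omega)))) (dCp (dle_mono dA3 (by omega))))
  · exact dCp_lt (dadd_lt (dadd_lt (dCp_lt (dlt_mono (dXlt dB1) (by omega)))
      (dCp_lt (dlt_mono dB2 (by omega)))) (dCp_lt (dlt_mono dB3 (by omega))))
  · intro h x y T hT hx hy hper hH
    have hv := g1 h x y T hT hx hy hper hH
    have hs := g2 h x y T hT hx hy hper hH
    have hw := g3 h x y T hT hx hy hper hH
    simp only [show 2*(d+1) = 2*d+2 by ring, show (2*1 : ℕ) = 2 by norm_num,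
      show (2*2 : ℕ) = 4 by norm_num] at hv hs hw
    have S1 := starR (T := T) hx hy hH (2*d) 2 (2*d+2) (2*d+4) 4 6
      (by omega) (by omega) (by omega) (by omega)
    have G0 := grelR hx hy hper hH (2*d+2) 0 (2*d+4) 2 4 (by omega) (by omega) (by omega)
    have G1 := grelR hx hy hper hH (2*d) 2 (2*d+2) 4 6 (by omega) (by omega) (by omega)
    have Z1 := exact_x hx hy hper (2*d+2)
    have Z2 := exact_x hx hy hper (2*d+4)
    push_cast at G0 G1
    have hM : (2*(2*(d:ℝ)+7)*(4*a*c - b^2)) ≠ 0 := by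
      refine mul_ne_zero (by positivity) ?_
      intro hz
      apply hD
      linarith
    have hMw : (2*(2*(d:ℝ)+7)*(4*a*c - b^2)) * (1/(2*(2*(d:ℝ)+7)*(4*a*c - b^2))) = 1 :=
      mul_one_div_cancel hM
    rw [show 2*(d+1) = 2*d+2 by ring, show (2*2 : ℕ) = 4 by norm_num]
    simp only [eval_mul, eval_add, eval_C, eval_X]
    linear_combination (1/(2*(2*(d:ℝ)+7)*(4*a*c - b^2))) *
      ( 2*a*G0 - b*(8*(2*(d:ℝ)+7)*S1 - G1) + 32*a*h*Z1 - 16*a*Z2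
        + (-((16*(d:ℝ)+8)*b))*h*hv + (-((4*(d:ℝ)+2)*b))*hs
        + ((16*(d:ℝ)+56)*a + (16*(d:ℝ)+32)*b)*hw )
      - lineInt x y T (2*d+2) 4 * hMw

-- the recursion case : Pq f (e+3)
private lemma case_rec (a b c : ℝ) (hc : c ≠ 0) (e f : ℕ)
    (IHV : Pq a b c f (e+1)) (IHW : Pq a b c (f+1) (e+1))
    (IHS : Pq a b c f (e+2)) (IHU : Pq a b c (f+1) (e+2)) :
    Pq a b c f (e+3) := by
  obtain ⟨AV, BV, dAV, dBV, gV⟩ := IHV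
  obtain ⟨AW, BW, dAW, dBW, gW⟩ := IHW
  obtain ⟨AS, BS, dAS, dBS, gS⟩ := IHS
  obtain ⟨AU, BU, dAU, dBU, gU⟩ := IHU
  refine ⟨C (1/(2*c*(2*(e:ℝ)+2*(f:ℝ)+7)*(2*(e:ℝ)+4))) *
      (C (-(b*(2*(e:ℝ)+2*(f:ℝ)+7)*(2*(e:ℝ)+6))) * AU +
        C (2*(2*(e:ℝ)+4)*(2*(e:ℝ)+6)) * (X * AV) +
        C (-((2*(e:ℝ)+4)*(2*(e:ℝ)+6))) * AW +
        C ((4*(e:ℝ)+2*(f:ℝ)+9)*(2*(e:ℝ)+6)) * AS),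
    C (1/(2*c*(2*(e:ℝ)+2*(f:ℝ)+7)*(2*(e:ℝ)+4))) *
      (C (-(b*(2*(e:ℝ)+2*(f:ℝ)+7)*(2*(e:ℝ)+6))) * BU +
        C (2*(2*(e:ℝ)+4)*(2*(e:ℝ)+6)) * (X * BV) +
        C (-((2*(e:ℝ)+4)*(2*(e:ℝ)+6))) * BW +
        C ((4*(e:ℝ)+2*(f:ℝ)+9)*(2*(e:ℝ)+6)) * BS), ?_, ?_, ?_⟩
  · exact dCp (dadd (dadd (dadd (dCp (dle_mono dAU (by omega)))
      (dCp (dle_mono (dXle dAV) (by omega)))) (dCp (dle_mono dAW (by omega))))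
      (dCp (dle_mono dAS (by omega))))
  · exact dCp_lt (dadd_lt (dadd_lt (dadd_lt (dCp_lt (dlt_mono dBU (by omega)))
      (dCp_lt (dlt_mono (dXlt dBV) (by omega)))) (dCp_lt (dlt_mono dBW (by omega))))
      (dCp_lt (dlt_mono dBS (by omega))))
  · intro h x y T hT hx hy hper hH
    have hV := gV h x y T hT hx hy hper hH
    have hW := gW h x y T hT hx hy hper hH
    have hS := gS h x y T hT hx hy hper hH
    have hU := gU h x y T hT hx hy hper hH
    simp only [show 2*(e+1) = 2*e+2 by ring, show 2*(e+2) = 2*e+4 by ring,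
      show 2*(f+1) = 2*f+2 by ring] at hV hW hS hU
    have Gq := grelR hx hy hper hH (2*f) (2*e+2) (2*f+2) (2*e+4) (2*e+6)
      (by omega) (by omega) (by omega)
    push_cast at Gq
    have hM : (2*c*(2*(e:ℝ)+2*(f:ℝ)+7)*(2*(e:ℝ)+4)) ≠ 0 := by
      refine mul_ne_zero (mul_ne_zero (mul_ne_zero two_ne_zero hc) (by positivity))
        (by positivity)
    have hMw : (2*c*(2*(e:ℝ)+2*(f:ℝ)+7)*(2*(e:ℝ)+4)) *
        (1/(2*c*(2*(e:ℝ)+2*(f:ℝ)+7)*(2*(e:ℝ)+4))) = 1 := mul_one_div_cancel hM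
    rw [show 2*(e+3) = 2*e+6 by ring]
    simp only [eval_mul, eval_add, eval_C, eval_X]
    linear_combination (1/(2*c*(2*(e:ℝ)+2*(f:ℝ)+7)*(2*(e:ℝ)+4))) *
      ( Gq + (-(b*(2*(e:ℝ)+2*(f:ℝ)+7)*(2*(e:ℝ)+6)))*hU
        + (2*(2*(e:ℝ)+4)*(2*(e:ℝ)+6))*h*hV
        + (-((2*(e:ℝ)+4)*(2*(e:ℝ)+6)))*hW
        + ((4*(e:ℝ)+2*(f:ℝ)+9)*(2*(e:ℝ)+6))*hS )
      - lineInt x y T (2*f) (2*e+6) * hMw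

lemma mainPq (a b c : ℝ) (hc : c ≠ 0) (hD : b^2 - 4*a*c ≠ 0) :
    ∀ M p q : ℕ, 2*(p+q)+q = M → Pq a b c p q := by
  intro M
  induction M using Nat.strong_induction_on with
  | _ M IH =>
    intro p q hM
    match q with
    | 0 => exact case_q0 a b c p
    | 1 =>
      match p with
      | 0 => exact case_01 a b c
      | 1 => exact case_11 a b c
      | d + 2 =>
        exact case_u1 a b c hc hD d
          (IH (2*(d+1)+1) (by omega) d 1 (by omega))
          (IH (2*(d+2)+2) (by omega) d 2 (by omega))
          (IH (2*(d+2)+1) (by omega) (d+1) 1 (by omega))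
    | 2 =>
      match p with
      | 0 => exact case_02 a b c hc
      | d + 1 =>
        exact case_u2 a b c hc hD d
          (IH (2*(d+1)+1) (by omega) d 1 (by omega))
          (IH (2*(d+2)+2) (by omega) d 2 (by omega))
          (IH (2*(d+2)+1) (by omega) (d+1) 1 (by omega))
    | e + 3 =>
      exact case_rec a b c hc e p
        (IH (2*(p+e+1)+e+1) (by omega) p (e+1) (by omega))
        (IH (2*(p+e+2)+e+1) (by omega) (p+1) (e+1) (by omega))
        (IH (2*(p+e+2)+e+2) (by omega) p (e+2) (by omega))
        (IH (2*(p+e+3)+e+2) (by omega) (p+1) (e+2) (by omega))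

theorem stmt6 (a b c : ℝ) (habc : a * c * (b ^ 2 - 4 * a * c) ≠ 0)
    (p q : ℕ) (hpq : 2 ≤ p + q) :
    ∃ l1 l2 : Polynomial ℝ,
      l1.degree ≤ (((2 * p + 2 * q - 2) / 4 : ℕ) : WithBot ℕ) ∧
      l2.degree < (((2 * p + 2 * q) / 4 : ℕ) : WithBot ℕ) ∧
      ∀ (h : ℝ) (x y : ℝ → ℝ) (T : ℝ), 0 < T →
        ContDiff ℝ 1 x → ContDiff ℝ 1 y →
        (∀ t : ℝ, x (t + T) = x t ∧ y (t + T) = y t) →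
        (∀ t : ℝ, Hfun a b c (x t) (y t) = h) →
        lineInt x y T (2 * p) (2 * q) =
          l1.eval h * lineInt x y T 0 2 + l2.eval h * lineInt x y T 2 2 := by
  have hc : c ≠ 0 := fun hz => habc (by rw [hz]; ring)
  have hD : b^2 - 4*a*c ≠ 0 := fun hz => habc (by rw [hz]; ring)
  obtain ⟨l1, l2, h1, h2, h3⟩ := mainPq a b c hc hD (2*(p+q)+q) p q rfl
  exact ⟨l1, l2, h1, h2, h3⟩
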